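/- There is a constant C > 0 such that for all positive integers x, the cardinality of the set {n : 1 ≤ n ≤ x, ⌊x/n⌋ is a prime power} differs from D·x by at most C·x^{1/2}, where D = Σ 1/(m(m+1)) summed over all prime powers m = p^k with p prime and k ≥ 1. That is, |{n : 1 ≤ n ≤ x, ⌊x/n⌋ is a prime power}| = D·x + O(x^{1/2}). -/

import Mathlib

open Finset Real

open scoped Classical in
noncomputable def ppf : ℕ → ℝ := fun m => if IsPrimePow m then 1 / ((m : ℝ) * ((m : ℝ) + 1)) else 0

lemma ppf_nonneg (m : ℕ) : 0 ≤ ppf m := by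
  unfold ppf; split
  · positivity
  · exact le_refl _

lemma ppf_le (m : ℕ) : ppf m ≤ 1 / ((m : ℝ) * ((m : ℝ) + 1)) := by
  unfold ppf; split
  · exact le_refl _
  · positivity

lemma ppf_summable : Summable ppf := by
  have hg : Summable (fun m : ℕ => 1 / (m : ℝ) ^ 2) :=
    Real.summable_one_div_nat_pow.mpr one_lt_two
  have hle : ∀ m : ℕ, ppf m ≤ 1 / (m : ℝ) ^ 2 := by
    intro m
    refine (ppf_le m).trans ?_
    rcases Nat.eq_zero_or_pos m with rfl | hm
    · simp
    · apply one_div_le_one_div_of_le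
      · positivity
      · have : (1:ℝ) ≤ m := by exact_mod_cast hm
        nlinarith
  exact Summable.of_nonneg_of_le ppf_nonneg hle hg

lemma ppf_tail (y : ℕ) : ∑' m : ℕ, ppf (m + (y+1)) ≤ 1 / ((y:ℝ)+1) := by
  apply Real.tsum_le_of_sum_range_le (fun n => ppf_nonneg _)
  intro n
  set g : ℕ → ℝ := fun i => 1 / ((i:ℝ) + y + 1) with hg
  have hsum : ∑ i ∈ range n, (g i - g (i+1)) = g 0 - g n := Finset.sum_range_sub' g n
  have hterm : ∀ i : ℕ, ppf (i + (y+1)) ≤ g i - g (i+1) := by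
    intro i
    refine (ppf_le _).trans ?_
    have h1 : (0:ℝ) < (i:ℝ) + y + 1 := by positivity
    have h2 : (0:ℝ) < (i:ℝ) + y + 2 := by positivity
    rw [le_sub_iff_add_le, hg]
    push_cast
    rw [div_add_div _ _ (by positivity) (by positivity), div_le_div_iff₀ (by positivity) (by positivity)]
    ring_nf
    nlinarith
  calc ∑ i ∈ range n, ppf (i + (y+1)) ≤ ∑ i ∈ range n, (g i - g (i+1)) :=
        Finset.sum_le_sum fun i _ => hterm i
    _ = g 0 - g n := hsum
    _ ≤ g 0 := by
        have : 0 ≤ g n := by rw [hg]; positivity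
        linarith
    _ = 1 / ((y:ℝ)+1) := by rw [hg]; push_cast; ring_nf

open scoped Classical in
lemma fiber_eq (x m : ℕ) (hm : 1 ≤ m) :
    (Finset.Icc 1 x).filter (fun n => x / n = m) = Finset.Ioc (x/(m+1)) (x/m) := by
  ext n
  simp only [mem_filter, mem_Icc, mem_Ioc]
  constructor
  · rintro ⟨⟨h1, h2⟩, rfl⟩
    have hn : 0 < n := h1
    constructor
    · by_contra h
      push_neg at h
      have h3 : n * (x/n + 1) ≤ x := (Nat.le_div_iff_mul_le (Nat.succ_pos _)).mp h
      have h4 : x/n + 1 ≤ x / n := (Nat.le_div_iff_mul_le hn).mpr (by rw [mul_comm]; exact h3)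
      exact Nat.not_succ_le_self _ h4
    · exact (Nat.le_div_iff_mul_le hm).mpr (by rw [mul_comm]; exact Nat.div_mul_le_self x n)
  · rintro ⟨h1, h2⟩
    have hn : 0 < n := Nat.lt_of_le_of_lt (Nat.zero_le _) h1
    have hle : m ≤ x / n := (Nat.le_div_iff_mul_le hn).mpr
      (by have h3 := (Nat.le_div_iff_mul_le hm).mp h2; rw [mul_comm]; exact h3)
    have hlt : x / n < m + 1 := by
      by_contra h
      push_neg at h
      have h3 : (m+1) * n ≤ x := (Nat.le_div_iff_mul_le hn).mp h
      have h4 : n ≤ x / (m+1) := (Nat.le_div_iff_mul_le (Nat.succ_pos m)).mpr (by rw [mul_comm]; exact h3)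
      exact absurd h4 (Nat.not_le.mpr h1)
    exact ⟨⟨hn, le_trans h2 (Nat.div_le_self x m)⟩, Nat.le_antisymm (Nat.lt_succ_iff.mp hlt) hle⟩

lemma div_cast_bounds (x m : ℕ) (hm : 0 < m) :
    (x:ℝ)/m - 1 < ((x/m : ℕ):ℝ) ∧ ((x/m : ℕ):ℝ) ≤ (x:ℝ)/m := by
  have hmR : (0:ℝ) < m := by exact_mod_cast hm
  refine ⟨?_, Nat.cast_div_le⟩
  have h1 : (m:ℝ) * ((x/m : ℕ):ℝ) + ((x % m : ℕ):ℝ) = x := by exact_mod_cast Nat.div_add_mod x m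
  have h2 : ((x % m : ℕ):ℝ) < m := by exact_mod_cast Nat.mod_lt x hm
  rw [sub_lt_iff_lt_add, div_lt_iff₀ hmR]
  nlinarith

lemma term_bound (x m : ℕ) (hm : 0 < m) :
    |(((x/m : ℕ):ℝ) - ((x/(m+1) : ℕ):ℝ)) - ((x:ℝ)/m - (x:ℝ)/(m+1))| ≤ 1 := by
  obtain ⟨a1, a2⟩ := div_cast_bounds x m hm
  obtain ⟨b1, b2⟩ := div_cast_bounds x (m+1) (by omega)
  rw [abs_le]
  push_cast at *
  constructor <;> linarith


open scoped Classical in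
/-- `Fpp x` is the cardinality of the set `{n : 1 ≤ n ≤ x, ⌊x/n⌋ is a prime power}`. -/
noncomputable def Fpp (x : ℕ) : ℕ :=
  ((Finset.Icc 1 x).filter (fun n => IsPrimePow (x / n))).card

open scoped Classical in
/-- `D = Σ_{m a prime power} 1/(m(m+1))`. -/
noncomputable def D : ℝ :=
  ∑' m : ℕ, if IsPrimePow m then 1 / ((m : ℝ) * ((m : ℝ) + 1)) else 0

theorem primePow_floor_count_asymptotic :
    ∃ C > (0:ℝ), ∀ x : ℕ, 0 < x →
      |(Fpp x : ℝ) - D * x| ≤ C * (x : ℝ) ^ ((1:ℝ)/2) := by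
  classical
  refine ⟨4, by norm_num, fun x hx => ?_⟩
  set y := Nat.sqrt x with hy
  have hx1 : (1:ℝ) ≤ (x:ℝ) := by exact_mod_cast hx
  have hsx : (x:ℝ) ^ ((1:ℝ)/2) = Real.sqrt x := (Real.sqrt_eq_rpow _).symm
  have hyR : (y:ℝ) ≤ Real.sqrt x := by
    rw [Real.le_sqrt (by positivity) (by positivity)]
    have h : ((y:ℝ))*(y:ℝ) ≤ (x:ℝ) := by exact_mod_cast Nat.sqrt_le x
    nlinarith
  have hsq1 : (1:ℝ) ≤ Real.sqrt x := by
    rw [Real.le_sqrt (by norm_num) (by positivity)]; nlinarith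
  have hxlt : x < (y+1) * (y+1) := Nat.lt_succ_sqrt x
  -- the sets
  set T := (Finset.Icc 1 y).filter IsPrimePow with hT
  set S := (Finset.Icc 1 x).filter (fun n => IsPrimePow (x / n)) with hS
  have hFpp : Fpp x = S.card := rfl
  set SA := S.filter (fun n => x / n ≤ y) with hSA
  set SB := S.filter (fun n => ¬ x / n ≤ y) with hSB
  have hsplit : SA.card + SB.card = S.card :=
    Finset.card_filter_add_card_filter_not _
  -- bound on SB
  have hB : SB.card ≤ y := by
    have hsub : SB ⊆ Finset.Icc 1 (x/(y+1)) := by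
      intro n hn
      simp only [hSB, hS, mem_filter, mem_Icc, not_le] at hn
      obtain ⟨⟨⟨hn1, hn2⟩, _⟩, hyn⟩ := hn
      refine Finset.mem_Icc.mpr ⟨hn1, ?_⟩
      have h1 : (y+1) ≤ x / n := hyn
      have h2 : (y+1) * n ≤ x := (Nat.le_div_iff_mul_le (by omega)).mp h1
      exact (Nat.le_div_iff_mul_le (Nat.succ_pos y)).mpr (by rw [mul_comm]; exact h2)
    have h3 : x / (y+1) < y + 1 := Nat.div_lt_of_lt_mul hxlt
    calc SB.card ≤ (Finset.Icc 1 (x/(y+1))).card := Finset.card_le_card hsub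
      _ = x/(y+1) := by rw [Nat.card_Icc]; simp
      _ ≤ y := by omega
  -- SA fiberwise
  have hA : SA.card = ∑ m ∈ T, (x/m - x/(m+1)) := by
    rw [Finset.card_eq_sum_card_fiberwise (f := fun n => x / n) (t := T)
      (fun n hn => ?_)]
    · apply Finset.sum_congr rfl
      intro m hm
      simp only [hT, mem_filter, mem_Icc] at hm
      obtain ⟨⟨hm1, hm2⟩, hmp⟩ := hm
      have heq : SA.filter (fun n => x/n = m) = (Finset.Icc 1 x).filter (fun n => x/n = m) := by
        ext n
        simp only [hSA, hS, mem_filter, mem_Icc]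
        constructor
        · tauto
        · rintro ⟨⟨hn1, hn2⟩, h2⟩
          refine ⟨⟨⟨⟨hn1, hn2⟩, ?_⟩, ?_⟩, h2⟩ <;> rw [h2]
          exacts [hmp, hm2]
      rw [heq, fiber_eq x m hm1, Nat.card_Ioc]
    · simp only [hSA, hS, coe_filter, Set.mem_setOf_eq, mem_coe, mem_filter, mem_Icc] at hn
      obtain ⟨⟨_, hpp⟩, hle⟩ := hn
      simp only [hT, coe_filter, Set.mem_setOf_eq, mem_coe, mem_filter, mem_Icc]
      exact ⟨⟨hpp.pos, hle⟩, hpp⟩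
  -- cast SA
  have hAR : (SA.card : ℝ) = ∑ m ∈ T, (((x/m:ℕ):ℝ) - ((x/(m+1):ℕ):ℝ)) := by
    rw [hA, Nat.cast_sum]
    apply Finset.sum_congr rfl
    intro m hm
    have hmp : 0 < m := ((mem_filter.mp hm).2).pos
    rw [Nat.cast_sub (Nat.div_le_div_left (Nat.le_succ m) hmp)]
  -- main estimate
  have hmain : |(SA.card:ℝ) - (x:ℝ) * ∑ m ∈ T, ppf m| ≤ (y:ℝ) := by
    rw [hAR, Finset.mul_sum, ← Finset.sum_sub_distrib]
    refine (Finset.abs_sum_le_sum_abs _ _).trans ?_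
    have hterm : ∀ m ∈ T, |(((x/m:ℕ):ℝ) - ((x/(m+1):ℕ):ℝ)) - (x:ℝ) * ppf m| ≤ 1 := by
      intro m hm
      have hpp := (mem_filter.mp hm).2
      have hm0 : 0 < m := hpp.pos
      have hm0R : (0:ℝ) < m := by exact_mod_cast hm0
      have hpf : ppf m = 1/((m:ℝ)*((m:ℝ)+1)) := if_pos hpp
      have hxm : (x:ℝ) * ppf m = (x:ℝ)/m - (x:ℝ)/(m+1) := by
        rw [hpf]; field_simp; ring
      rw [hxm]
      have := term_bound x m hm0
      push_cast at this ⊢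
      exact this
    calc ∑ m ∈ T, |(((x/m:ℕ):ℝ) - ((x/(m+1):ℕ):ℝ)) - (x:ℝ) * ppf m|
        ≤ ∑ _m ∈ T, (1:ℝ) := Finset.sum_le_sum hterm
      _ = T.card := by simp
      _ ≤ ((Finset.Icc 1 y).card : ℝ) := by
          exact_mod_cast Finset.card_le_card (Finset.filter_subset _ _)
      _ = (y:ℝ) := by rw [Nat.card_Icc]; simp
  -- D split
  have hD0 : D = ∑' m, ppf m := rfl
  have hD : D = (∑ m ∈ range (y+1), ppf m) + ∑' m, ppf (m + (y+1)) :=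
    by rw [hD0, ← Summable.sum_add_tsum_nat_add (y+1) ppf_summable]
  have hTeq : T = (range (y+1)).filter IsPrimePow := by
    ext m
    simp only [hT, mem_filter, mem_Icc, mem_range, Nat.lt_succ_iff]
    constructor
    · rintro ⟨⟨_, h2⟩, hp⟩; exact ⟨h2, hp⟩
    · rintro ⟨h2, hp⟩; exact ⟨⟨hp.pos, h2⟩, hp⟩
  have hTsum : ∑ m ∈ T, ppf m = ∑ m ∈ range (y+1), ppf m := by
    rw [hTeq]
    exact Finset.sum_filter_of_ne (fun m _ hne => by
      by_contra hp
      exact hne (by unfold ppf; exact if_neg hp))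
  -- tail bound
  have htail0 : 0 ≤ ∑' m, ppf (m + (y+1)) := tsum_nonneg fun m => ppf_nonneg _
  have htail : (∑' m, ppf (m + (y+1))) * x ≤ (y:ℝ) + 1 := by
    have h1 : (∑' m, ppf (m + (y+1))) * x ≤ (1/((y:ℝ)+1)) * x :=
      mul_le_mul_of_nonneg_right (ppf_tail y) (by positivity)
    have hx2 : (x:ℝ) ≤ ((y:ℝ)+1)*((y:ℝ)+1) := by exact_mod_cast hxlt.le
    have h2 : (1/((y:ℝ)+1)) * x ≤ (y:ℝ)+1 := by
      rw [one_div_mul_eq_div, div_le_iff₀ (by positivity)]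
      linarith
    linarith
  -- assemble
  have hBR : (SB.card : ℝ) ≤ (y:ℝ) := by exact_mod_cast hB
  have hBR0 : (0:ℝ) ≤ (SB.card : ℝ) := by positivity
  have hFppR : (Fpp x : ℝ) = (SA.card : ℝ) + (SB.card : ℝ) := by
    rw [hFpp, ← hsplit]; push_cast; ring
  have hDx : D * x = (x:ℝ) * (∑ m ∈ T, ppf m) + (∑' m, ppf (m + (y+1))) * x := by
    rw [hD, hTsum]; ring
  have key : |(Fpp x : ℝ) - D * x| ≤ 3*(y:ℝ) + 1 := by
    have h1 : |(SA.card:ℝ) - (x:ℝ) * ∑ m ∈ T, ppf m| ≤ (y:ℝ) := hmain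
    rw [abs_le] at h1 ⊢
    have htx0 : 0 ≤ (∑' m, ppf (m + (y+1))) * x := by positivity
    constructor
    · rw [hFppR, hDx]; linarith
    · rw [hFppR, hDx]; linarith
  rw [hsx]
  have hy4 : 3*(y:ℝ) + 1 ≤ 4 * Real.sqrt x := by linarith
  linarith
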